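/- For x, y ∈ ℝⁿ, if ⟨x, y⟩ = ⟨x↓, y↓⟩ then there exists a single permutation σ of {1,…,n} such that σ·x = x↓ and σ·y = y↓. -/

import Mathlib

open Finset

/-- Decreasing rearrangement of a vector in ℝⁿ. -/
noncomputable def dsort {n : ℕ} (v : Fin n → ℝ) : Fin n → ℝ :=
  fun i => - ((fun j => - v j) ∘ Tuple.sort (fun j => - v j)) i

lemma dsort_antitone {n : ℕ} (v : Fin n → ℝ) : Antitone (dsort v) := by
  have h := Tuple.monotone_sort (fun j => - v j)
  intro i j hij
  have := h hij
  simp only [dsort, Function.comp_apply] at *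
  linarith

lemma dsort_apply {n : ℕ} (v : Fin n → ℝ) (i : Fin n) :
    dsort v i = v (Tuple.sort (fun j => - v j) i) := by
  simp [dsort]

lemma le_sorted {n : ℕ} (x y : Fin n → ℝ) (e : Equiv.Perm (Fin n)) :
    ∑ i, x i * y (e i) ≤ ∑ i, dsort x i * dsort y i := by
  set σx := Tuple.sort (fun j => - x j) with hσx
  set σy := Tuple.sort (fun j => - y j) with hσy
  have key : ∑ i, x i * y (e i) = ∑ i, dsort x i * dsort y ((σx.trans (e.trans σy.symm)) i) := by
    rw [← Equiv.sum_comp σx (fun i => x i * y (e i))]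
    refine Finset.sum_congr rfl fun i _ => ?_
    simp [dsort_apply, ← hσx, ← hσy]
  rw [key]
  exact ((dsort_antitone x).monovary (dsort_antitone y)).sum_mul_comp_perm_le_sum_mul

theorem stmt8 {n : ℕ} (x y : Fin n → ℝ)
    (heq : ∑ i, x i * y i = ∑ i, dsort x i * dsort y i) :
    ∃ σ : Equiv.Perm (Fin n),
      (fun i => x (σ i)) = dsort x ∧ (fun i => y (σ i)) = dsort y := by
  -- Step 1: equality forces monovariance of x and y
  have hM : Monovary x y := by
    intro i j hyij
    by_contra hx
    push_neg at hx
    have hij : i ≠ j := fun h => by subst h; exact lt_irrefl _ hyij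
    set s := Equiv.swap i j with hs
    have hle : ∑ k, x k * y (s k) ≤ ∑ k, dsort x k * dsort y k := le_sorted x y s
    have hdiff : ∑ k, x k * y (s k) - ∑ k, x k * y k
        = (x i - x j) * (y j - y i) := by
      rw [← Finset.sum_sub_distrib]
      have hzero : ∀ k ∈ (Finset.univ : Finset (Fin n)),
          k ∉ ({i, j} : Finset (Fin n)) → x k * y (s k) - x k * y k = 0 := by
        intro k _ hk
        simp only [Finset.mem_insert, Finset.mem_singleton, not_or] at hk
        rw [hs, Equiv.swap_apply_of_ne_of_ne hk.1 hk.2]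
        ring
      rw [← Finset.sum_subset (Finset.subset_univ ({i, j} : Finset (Fin n))) hzero,
        Finset.sum_pair hij]
      rw [hs, Equiv.swap_apply_left, Equiv.swap_apply_right]
      ring
    have hpos : (0:ℝ) < (x i - x j) * (y j - y i) := by nlinarith
    linarith [heq, hle, hdiff]
  -- Step 2: sort lexicographically by (-x, -y)
  set f : Fin n → Lex (ℝ × ℝ) := fun i => toLex (-x i, -y i) with hf
  set σ := Tuple.sort f with hσdef
  have hmono : Monotone (f ∘ σ) := Tuple.monotone_sort f
  have hxmono : Monotone ((fun j => - x j) ∘ σ) := by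
    intro i j hij
    have h := hmono hij
    simp only [hf, Function.comp_apply] at h
    rcases Prod.Lex.le_iff.mp h with h1 | h1
    · exact le_of_lt h1
    · exact le_of_eq h1.1
  have hymono : Monotone ((fun j => - y j) ∘ σ) := by
    intro i j hij
    have h := hmono hij
    simp only [hf, Function.comp_apply] at h
    rcases Prod.Lex.le_iff.mp h with h1 | h1
    · -- -x (σ i) < -x (σ j), i.e. x (σ j) < x (σ i)
      have hxx : x (σ j) < x (σ i) := by
        simpa using h1
      simp only [Function.comp_apply, neg_le_neg_iff]
      by_contra hcon
      push_neg at hcon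
      exact absurd (hM hcon) (not_le.mpr hxx)
    · exact h1.2
  have hxeq : (fun j => - x j) ∘ σ = (fun j => - x j) ∘ Tuple.sort (fun j => - x j) :=
    Tuple.comp_sort_eq_comp_iff_monotone.mpr hxmono
  have hyeq : (fun j => - y j) ∘ σ = (fun j => - y j) ∘ Tuple.sort (fun j => - y j) :=
    Tuple.comp_sort_eq_comp_iff_monotone.mpr hymono
  refine ⟨σ, funext fun i => ?_, funext fun i => ?_⟩
  · have := congrFun hxeq i
    simp only [Function.comp_apply] at this
    rw [dsort_apply]
    linarith
  · have := congrFun hyeq i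
    simp only [Function.comp_apply] at this
    rw [dsort_apply]
    linarith
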